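/- For every integer n ≥ 2, the region 𝒯(3,2ⁿ) (the tuple consisting of 3 followed by n entries equal to 2) is exactly the set of points (x,y) satisfying (2n−1)/(2n+1) < x ≤ 1 and (1+x)/4 < y ≤ (1+(n+1)x)/(2n+3); its closure is the triangle with vertices ((2n−1)/(2n+1), n/(2n+1)), (1, (n+2)/(2n+3)), and (1, 1/2). -/

import Mathlib

open MeasureTheory

/-- The BCZ transform T(x,y) = (y, ⌊(1+x)/y⌋·y − x). -/
noncomputable def bcz (p : ℝ × ℝ) : ℝ × ℝ :=
  (p.2, (⌊(1 + p.1) / p.2⌋ : ℝ) * p.2 - p.1)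

/-- The Farey triangle 𝒯 = {(x,y) : 0 < x ≤ 1, 0 < y ≤ 1, x + y > 1}. -/
def fareyTriangle : Set (ℝ × ℝ) :=
  {p | 0 < p.1 ∧ p.1 ≤ 1 ∧ 0 < p.2 ∧ p.2 ≤ 1 ∧ 1 < p.1 + p.2}

/-- The region 𝒯(k) = {(x,y) ∈ 𝒯 : ⌊(1+x)/y⌋ = k}. -/
def TT (k : ℕ) : Set (ℝ × ℝ) :=
  {p | p ∈ fareyTriangle ∧ ⌊(1 + p.1) / p.2⌋ = (k : ℤ)}

/-- The region 𝒯(k₁,…,k_r) = 𝒯(k₁) ∩ T⁻¹(𝒯(k₂)) ∩ ⋯ ∩ T^{−(r−1)}(𝒯(k_r)). -/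
noncomputable def TTlist (ks : List ℕ) : Set (ℝ × ℝ) :=
  ⋂ i : Fin ks.length, (bcz^[i.1]) ⁻¹' TT (ks.get i)

open Filter Topology

set_option maxHeartbeats 1000000

lemma floor_eq_of (k : ℤ) {a b : ℝ} (hb : 0 < b) (h1 : k * b ≤ a) (h2 : a < (k + 1) * b) :
    ⌊a / b⌋ = k := by
  rw [Int.floor_eq_iff]
  refine ⟨by rwa [le_div_iff₀ hb], ?_⟩
  rw [div_lt_iff₀ hb]; push_cast; linarith

lemma of_floor_eq {k : ℤ} {a b : ℝ} (hb : 0 < b) (h : ⌊a / b⌋ = k) :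
    k * b ≤ a ∧ a < (k + 1) * b := by
  have h1 := Int.floor_le (a / b)
  have h2 := Int.lt_floor_add_one (a / b)
  rw [h] at h1 h2
  constructor
  · calc (k:ℝ) * b ≤ (a/b) * b := by nlinarith
    _ = a := by field_simp
  · calc a = (a/b) * b := by field_simp
    _ < (k+1)*b := by push_cast at h2 ⊢; nlinarith

/-- Membership of orbit points in TT 2. -/
lemma pt_mem_TT2 {x y w : ℝ} (n i : ℕ) (hi1 : 1 ≤ i) (hin : i ≤ n)
    (hw : 0 < w) (hy : 0 < y) (hx1 : x ≤ 1) (h4y : 1 + x < 4 * y) (hwxy : w = 2 * y - x)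
    (hup : y + ((n:ℝ) + 1) * w ≤ 1) :
    ((y + ((i:ℝ) - 1) * w, y + (i:ℝ) * w) : ℝ × ℝ) ∈ TT 2 := by
  have hi1' : (1:ℝ) ≤ (i:ℝ) := by exact_mod_cast hi1
  have hin' : (i:ℝ) ≤ (n:ℝ) := by exact_mod_cast hin
  have him : 0 ≤ ((i:ℝ) - 1) * w := mul_nonneg (by linarith) hw.le
  have hiw : 0 < y + (i:ℝ) * w := by nlinarith
  have hfloor : ⌊(1 + (y + ((i:ℝ) - 1) * w)) / (y + (i:ℝ) * w)⌋ = 2 := by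
    apply floor_eq_of 2 hiw
    · push_cast; nlinarith
    · push_cast; nlinarith
  refine ⟨⟨?_, ?_, hiw, ?_, ?_⟩, hfloor⟩ <;> dsimp only <;> nlinarith

/-- Orbit formula + backward direction. -/
lemma back (n : ℕ) (hn : 2 ≤ n) (p : ℝ × ℝ)
    (h1 : (2 * (n : ℝ) - 1) / (2 * (n : ℝ) + 1) < p.1) (h2 : p.1 ≤ 1)
    (h3 : (1 + p.1) / 4 < p.2) (h4 : p.2 ≤ (1 + ((n : ℝ) + 1) * p.1) / (2 * (n : ℝ) + 3)) :
    p ∈ TT 3 ∧ ∀ i, 1 ≤ i → i ≤ n → bcz^[i] p ∈ TT 2 := by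
  obtain ⟨x, y⟩ := p
  dsimp only at *
  set w : ℝ := 2 * y - x with hwxy
  have hn' : (2:ℝ) ≤ (n:ℝ) := by exact_mod_cast hn
  have hd1 : (0:ℝ) < 2 * (n:ℝ) + 1 := by linarith
  have hd3 : (0:ℝ) < 2 * (n:ℝ) + 3 := by linarith
  rw [div_lt_iff₀ hd1] at h1
  rw [div_lt_iff₀ (by norm_num : (0:ℝ) < 4)] at h3
  rw [le_div_iff₀ hd3] at h4
  -- basic facts
  have hx0 : 0 < x := by nlinarith
  have hx35 : 3 < 5 * x := by nlinarith [mul_nonneg (by linarith : (0:ℝ) ≤ (n:ℝ) - 2) (by linarith : (0:ℝ) ≤ 1 - x)]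
  have h4y : 1 + x < 4 * y := by linarith
  have hy0 : 0 < y := by linarith
  have hw : 0 < w := by rw [hwxy]; linarith
  have hup : y + ((n:ℝ) + 1) * w ≤ 1 := by rw [hwxy]; nlinarith
  have h3y : 3 * y ≤ 1 + x := by
    nlinarith [mul_nonneg (by positivity : (0:ℝ) ≤ (n:ℝ)) (by linarith : (0:ℝ) ≤ 1 - x)]
  have hfloor3 : ⌊(1 + x) / y⌋ = 3 := by
    apply floor_eq_of 3 hy0 (by push_cast; linarith) (by push_cast; linarith)
  have hTT3 : ((x, y) : ℝ × ℝ) ∈ TT 3 := by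
    refine ⟨⟨?_, ?_, ?_, ?_, ?_⟩, ?_⟩ <;> dsimp only
    · exact hx0
    · exact h2
    · exact hy0
    · nlinarith
    · linarith
    · exact hfloor3
  have key : ∀ i, 1 ≤ i → i ≤ n →
      bcz^[i] ((x, y) : ℝ × ℝ) = (y + ((i:ℝ) - 1) * w, y + (i:ℝ) * w) := by
    intro i hi1 hin
    induction i, hi1 using Nat.le_induction with
    | base =>
      simp only [Function.iterate_one, bcz, hfloor3, Prod.mk.injEq, hwxy]
      constructor <;> push_cast <;> ring
    | succ i hi ih =>
      have hin' : i ≤ n := by omega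
      have heq := ih hin'
      rw [Function.iterate_succ_apply', heq]
      have hmem := pt_mem_TT2 (x := x) n i hi hin' hw hy0 h2 h4y hwxy hup
      have hfl := hmem.2
      simp only [bcz, Prod.fst, Prod.snd] at hfl ⊢
      rw [hfl]
      simp only [Prod.mk.injEq]
      constructor <;> push_cast <;> ring
  refine ⟨hTT3, fun i hi1 hin => ?_⟩
  rw [key i hi1 hin]
  exact pt_mem_TT2 (x := x) n i hi1 hin hw hy0 h2 h4y hwxy hup

/-- Forward direction. -/
lemma fwd (n : ℕ) (hn : 2 ≤ n) (p : ℝ × ℝ) (h0 : p ∈ TT 3)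
    (h : ∀ j, 1 ≤ j → j ≤ n → bcz^[j] p ∈ TT 2) :
    (2 * (n : ℝ) - 1) / (2 * (n : ℝ) + 1) < p.1 ∧ p.1 ≤ 1 ∧
      (1 + p.1) / 4 < p.2 ∧ p.2 ≤ (1 + ((n : ℝ) + 1) * p.1) / (2 * (n : ℝ) + 3) := by
  obtain ⟨x, y⟩ := p
  obtain ⟨⟨hx0, hx1, hy0, hy1, hxy⟩, hfl3⟩ := h0
  dsimp only at *
  set w : ℝ := 2 * y - x with hwxy
  have hn' : (2:ℝ) ≤ (n:ℝ) := by exact_mod_cast hn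
  have hd1 : (0:ℝ) < 2 * (n:ℝ) + 1 := by linarith
  have hd3 : (0:ℝ) < 2 * (n:ℝ) + 3 := by linarith
  obtain ⟨hfa, hfb⟩ := of_floor_eq hy0 hfl3
  push_cast at hfa hfb
  -- orbit formula
  have orbit : ∀ i, 1 ≤ i → i ≤ n →
      bcz^[i] ((x, y) : ℝ × ℝ) = (y + ((i:ℝ) - 1) * w, y + (i:ℝ) * w) := by
    intro i hi1 hin
    induction i, hi1 using Nat.le_induction with
    | base =>
      simp only [Function.iterate_one, bcz, hfl3, Prod.mk.injEq, hwxy]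
      constructor <;> push_cast <;> ring
    | succ i hi ih =>
      have hin' : i ≤ n := by omega
      have heq := ih hin'
      obtain ⟨⟨_, _, hq2, _, _⟩, hfl2⟩ := h i hi hin'
      rw [heq] at hfl2 hq2
      dsimp only at hfl2 hq2
      rw [Function.iterate_succ_apply', heq]
      simp only [bcz, hfl2, Prod.mk.injEq]
      constructor <;> push_cast <;> ring
  -- extract inequalities
  have h4y : 1 + x < 4 * y := by linarith
  obtain ⟨⟨_, _, hq2, _, _⟩, hfl2⟩ := h n (by omega) le_rfl
  rw [orbit n (by omega) le_rfl] at hfl2 hq2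
  dsimp only at hfl2 hq2
  obtain ⟨hga, hgb⟩ := of_floor_eq hq2 hfl2
  push_cast at hga hgb
  have hup : (2 * (n:ℝ) + 3) * y ≤ 1 + ((n:ℝ) + 1) * x := by rw [hwxy] at hga; nlinarith
  refine ⟨?_, hx1, ?_, ?_⟩
  · rw [div_lt_iff₀ hd1]
    nlinarith
  · rw [div_lt_iff₀ (by norm_num : (0:ℝ) < 4)]; linarith
  · rw [le_div_iff₀ hd3]; linarith


lemma mem_TTlist_iff (n : ℕ) (p : ℝ × ℝ) :
    p ∈ TTlist (3 :: List.replicate n 2) ↔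
      p ∈ TT 3 ∧ ∀ j, 1 ≤ j → j ≤ n → bcz^[j] p ∈ TT 2 := by
  rw [TTlist, Set.mem_iInter]
  constructor
  · intro h
    refine ⟨by simpa using h ⟨0, by simp⟩, fun j h1 h2 => ?_⟩
    obtain ⟨j', rfl⟩ := Nat.exists_eq_add_of_le' h1
    have := h ⟨j' + 1, by simp; omega⟩
    simpa [List.getElem_replicate] using this
  · rintro ⟨h0, h⟩ ⟨i, hi⟩
    match i with
    | 0 => simpa using h0
    | (j+1) =>
      have hj : j + 1 ≤ n := by simp at hi; omega
      have := h (j+1) (by omega) hj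
      simpa using this


/-- closure of the half-open triangle equals the hull of three vertices -/
lemma closure_S (n : ℕ) (hn : 2 ≤ n) :
    closure {p : ℝ × ℝ | (2 * (n : ℝ) - 1) / (2 * (n : ℝ) + 1) < p.1 ∧ p.1 ≤ 1 ∧
        (1 + p.1) / 4 < p.2 ∧ p.2 ≤ (1 + ((n : ℝ) + 1) * p.1) / (2 * (n : ℝ) + 3)} =
      convexHull ℝ ({((2 * (n : ℝ) - 1) / (2 * (n : ℝ) + 1), (n : ℝ) / (2 * (n : ℝ) + 1)),
        (1, ((n : ℝ) + 2) / (2 * (n : ℝ) + 3)), (1, 1 / 2)} : Set (ℝ × ℝ)) := by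
  have hn' : (2:ℝ) ≤ (n:ℝ) := by exact_mod_cast hn
  have hd1 : (0:ℝ) < 2 * (n:ℝ) + 1 := by linarith
  have hd3 : (0:ℝ) < 2 * (n:ℝ) + 3 := by linarith
  set N : ℝ := (n:ℝ) with hN
  set S : Set (ℝ × ℝ) := {p : ℝ × ℝ | (2 * N - 1) / (2 * N + 1) < p.1 ∧ p.1 ≤ 1 ∧
      (1 + p.1) / 4 < p.2 ∧ p.2 ≤ (1 + (N + 1) * p.1) / (2 * N + 3)} with hS
  set K : Set (ℝ × ℝ) := {p : ℝ × ℝ | p.1 ≤ 1} ∩ {p : ℝ × ℝ | 1 + p.1 ≤ 4 * p.2} ∩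
      {p : ℝ × ℝ | (2 * N + 3) * p.2 ≤ 1 + (N + 1) * p.1} with hK
  have memK : ∀ p : ℝ × ℝ, p ∈ K ↔
      p.1 ≤ 1 ∧ 1 + p.1 ≤ 4 * p.2 ∧ (2 * N + 3) * p.2 ≤ 1 + (N + 1) * p.1 := by
    intro p
    simp only [hK, Set.mem_inter_iff, Set.mem_setOf_eq]
    tauto
  have hSK : S ⊆ K := by
    rintro ⟨x, y⟩ ⟨h1, h2, h3, h4⟩
    rw [div_lt_iff₀ (by norm_num : (0:ℝ) < 4)] at h3
    rw [le_div_iff₀ hd3] at h4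
    rw [memK]
    exact ⟨h2, by dsimp only at *; linarith, by dsimp only at *; linarith⟩
  have hKclosed : IsClosed K := by
    refine IsClosed.inter (IsClosed.inter ?_ ?_) ?_
    · exact isClosed_le continuous_fst continuous_const
    · exact isClosed_le (continuous_const.add continuous_fst) (continuous_const.mul continuous_snd)
    · exact isClosed_le (continuous_const.mul continuous_snd)
        (continuous_const.add (continuous_const.mul continuous_fst))
  have hKsub : K ⊆ closure S := by
    rintro ⟨x, y⟩ hp
    rw [memK] at hp
    obtain ⟨hp1, hp2, hp3⟩ := hp
    dsimp only at hp1 hp2 hp3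
    set y₂ : ℝ := (N + 2) / (2 * N + 3) with hy₂
    have hy2e : (2 * N + 3) * y₂ = N + 2 := by
      rw [hy₂]; field_simp
    have hy2a : 1 + 1 < 4 * y₂ := by nlinarith
    -- the approximating sequence
    have hmem : ∀ k : ℕ, ((1:ℝ)/(k+1)) • ((1, y₂) : ℝ × ℝ) + (1 - (1:ℝ)/(k+1)) • ((x, y) : ℝ × ℝ) ∈ S := by
      intro k
      set t : ℝ := (1:ℝ)/(k+1) with ht
      have ht0 : 0 < t := by positivity
      have ht1 : t ≤ 1 := by
        rw [ht, div_le_one (by positivity)]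
        simp
      simp only [Prod.smul_mk, Prod.mk_add_mk, smul_eq_mul, hS, Set.mem_setOf_eq]
      have hA : 1 + (t * 1 + (1 - t) * x) < 4 * (t * y₂ + (1 - t) * y) := by
        nlinarith [mul_nonneg (by linarith : (0:ℝ) ≤ 1 - t) (by linarith : (0:ℝ) ≤ 4 * y - 1 - x)]
      have hB : (2 * N + 3) * (t * y₂ + (1 - t) * y) ≤ 1 + (N + 1) * (t * 1 + (1 - t) * x) := by
        nlinarith [mul_nonneg (by linarith : (0:ℝ) ≤ 1 - t)
          (by linarith : (0:ℝ) ≤ 1 + (N + 1) * x - (2 * N + 3) * y)]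
      refine ⟨?_, ?_, ?_, ?_⟩
      · rw [div_lt_iff₀ hd1]
        nlinarith [mul_lt_mul_of_pos_left hA hd3]
      · nlinarith [mul_nonneg (by linarith : (0:ℝ) ≤ 1 - t) (by linarith : (0:ℝ) ≤ 1 - x)]
      · rw [div_lt_iff₀ (by norm_num : (0:ℝ) < 4)]
        linarith
      · rw [le_div_iff₀ hd3]
        linarith
    have htend : Tendsto (fun k : ℕ => ((1:ℝ)/(k+1)) • ((1, y₂) : ℝ × ℝ) + (1 - (1:ℝ)/(k+1)) • ((x, y) : ℝ × ℝ))
        atTop (𝓝 ((x, y) : ℝ × ℝ)) := by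
      have h0 : Tendsto (fun k : ℕ => (1:ℝ)/(k+1)) atTop (𝓝 0) :=
        tendsto_one_div_add_atTop_nhds_zero_nat
      have h1 : Tendsto (fun k : ℕ => (1:ℝ) - 1/(k+1)) atTop (𝓝 1) := by
        simpa using tendsto_const_nhds.sub h0
      have := (h0.smul_const ((1, y₂) : ℝ × ℝ)).add (h1.smul_const ((x, y) : ℝ × ℝ))
      simpa using this
    exact mem_closure_of_tendsto htend (Filter.Eventually.of_forall hmem)
  -- the convex hull equals K
  have hhull : convexHull ℝ ({((2 * N - 1) / (2 * N + 1), N / (2 * N + 1)),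
      (1, (N + 2) / (2 * N + 3)), (1, 1 / 2)} : Set (ℝ × ℝ)) = K := by
    apply Set.Subset.antisymm
    · apply convexHull_min
      · rintro p hp
        rw [memK]
        have hne1 : (2 * N + 1) ≠ 0 := hd1.ne'
        have hne3 : (2 * N + 3) ≠ 0 := hd3.ne'
        rcases hp with rfl | rfl | rfl
        · refine ⟨?_, ?_, ?_⟩ <;> dsimp only
          · rw [div_le_one hd1]; linarith
          · have e1 : 1 + (2*N-1)/(2*N+1) = 4*(N/(2*N+1)) := by field_simp; ring
            rw [e1]
          · have e1 : (2*N+3)*(N/(2*N+1)) = ((2*N+3)*N)/(2*N+1) := by ring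
            have e2 : 1+(N+1)*((2*N-1)/(2*N+1)) = ((2*N+1)+(N+1)*(2*N-1))/(2*N+1) := by
              field_simp
            rw [e1, e2, div_le_div_iff₀ hd1 hd1]
            nlinarith
        · refine ⟨le_refl _, ?_, ?_⟩ <;> dsimp only
          · have e : 4*((N+2)/(2*N+3)) = (4*(N+2))/(2*N+3) := by ring
            rw [e, le_div_iff₀ hd3]; linarith
          · have e : (2*N+3)*((N+2)/(2*N+3)) = N+2 := by field_simp
            rw [e]; linarith
        · refine ⟨le_refl _, by norm_num, ?_⟩
          dsimp only
          nlinarith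
      · rintro p hp q hq a b ha hb hab
        rw [memK] at hp hq ⊢
        obtain ⟨hp1, hp2, hp3⟩ := hp
        obtain ⟨hq1, hq2, hq3⟩ := hq
        have e1 : (a • p + b • q).1 = a * p.1 + b * q.1 := rfl
        have e2 : (a • p + b • q).2 = a * p.2 + b * q.2 := rfl
        rw [e1, e2]
        refine ⟨?_, ?_, ?_⟩
        · nlinarith [mul_le_mul_of_nonneg_left hp1 ha, mul_le_mul_of_nonneg_left hq1 hb]
        · nlinarith [mul_le_mul_of_nonneg_left hp2 ha, mul_le_mul_of_nonneg_left hq2 hb]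
        · nlinarith [mul_le_mul_of_nonneg_left hp3 ha, mul_le_mul_of_nonneg_left hq3 hb]
    · rintro ⟨x, y⟩ hp
      rw [memK] at hp
      obtain ⟨hp1, hp2, hp3⟩ := hp
      dsimp only at hp1 hp2 hp3
      set v₁ : ℝ × ℝ := ((2 * N - 1) / (2 * N + 1), N / (2 * N + 1)) with hv₁
      set v₂ : ℝ × ℝ := (1, (N + 2) / (2 * N + 3)) with hv₂
      set v₃ : ℝ × ℝ := (1, 1 / 2) with hv₃
      have hne1 : (2 * N + 1) ≠ 0 := hd1.ne'
      have hne3 : (2 * N + 3) ≠ 0 := hd3.ne'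
      have hl1 : (0:ℝ) ≤ (1 - x) * (2 * N + 1) / 2 :=
        div_nonneg (mul_nonneg (by linarith) (by linarith)) (by norm_num)
      have hl2 : (0:ℝ) ≤ (2 * N + 3) * (4 * y - 1 - x) / 2 :=
        div_nonneg (mul_nonneg hd3.le (by linarith)) (by norm_num)
      have hl3 : (0:ℝ) ≤ 2 + (2 * N + 2) * x - 2 * (2 * N + 3) * y := by linarith
      set l1 : ℝ := (1 - x) * (2 * N + 1) / 2 with hL1
      set l2 : ℝ := (2 * N + 3) * (4 * y - 1 - x) / 2 with hL2
      set l3 : ℝ := 2 + (2 * N + 2) * x - 2 * (2 * N + 3) * y with hL3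
      have hsum : l1 + (l2 + l3) = 1 := by rw [hL1, hL2, hL3]; ring
      rcases eq_or_lt_of_le (add_nonneg hl2 hl3) with hm | hm
      · -- degenerate: p = v₁
        have hl2e : l2 = 0 := by linarith
        have hl3e : l3 = 0 := by linarith
        rw [hL2] at hl2e
        rw [hL3] at hl3e
        have h2' : 4 * y - 1 - x = 0 := by
          have h := hl2e
          have h2 : (2 * N + 3) * (4 * y - 1 - x) = 0 := by linarith
          rcases mul_eq_zero.1 h2 with h' | h'
          · exact absurd h' hne3
          · exact h'
        have hpx : x = (2 * N - 1) / (2 * N + 1) := by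
          rw [eq_div_iff hne1]
          linear_combination 2 * hl2e + 2 * hl3e
        have hpy : y = N / (2 * N + 1) := by
          rw [eq_div_iff hne1]
          linear_combination (N + 1) * h2' + (1 / 2) * hl3e
        have : ((x, y) : ℝ × ℝ) = v₁ := by rw [hv₁, Prod.mk.injEq]; exact ⟨hpx, hpy⟩
        rw [this]
        exact subset_convexHull ℝ _ (by simp)
      · rw [show ({v₁, v₂, v₃} : Set (ℝ × ℝ)) = insert v₁ {v₂, v₃} from rfl,
          convexHull_insert ⟨v₂, by simp⟩, convexHull_pair]
        set m : ℝ := l2 + l3 with hm'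
        rw [mem_convexJoin]
        refine ⟨v₁, rfl, (l2 / m) • v₂ + (l3 / m) • v₃, ⟨l2 / m, l3 / m,
          div_nonneg hl2 hm.le, div_nonneg hl3 hm.le,
          by rw [← add_div, ← hm', div_self hm.ne'], rfl⟩,
          l1, m, hl1, hm.le, by linarith, ?_⟩
        rw [smul_add, smul_smul, smul_smul, mul_div_cancel₀ _ hm.ne', mul_div_cancel₀ _ hm.ne']
        rw [hv₁, hv₂, hv₃, Prod.smul_mk, Prod.smul_mk, Prod.smul_mk, Prod.mk_add_mk,
          Prod.mk_add_mk, Prod.mk.injEq]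
        constructor
        · rw [hL1, hL2, hL3]
          linear_combination ((1 - x) * (2 * N - 1) / 2) * mul_inv_cancel₀ hne1
        · rw [hL1, hL2, hL3]
          linear_combination ((1 - x) * N / 2) * mul_inv_cancel₀ hne1 +
            ((4 * y - 1 - x) * (N + 2) / 2) * mul_inv_cancel₀ hne3
  rw [hhull]
  exact Set.Subset.antisymm (closure_minimal hSK hKclosed) hKsub


/-- For n ≥ 2, the region 𝒯(3,2ⁿ) is exactly the set of points (x,y) with
(2n−1)/(2n+1) < x ≤ 1 and (1+x)/4 < y ≤ (1+(n+1)x)/(2n+3); its closure is the triangle with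
vertices ((2n−1)/(2n+1), n/(2n+1)), (1, (n+2)/(2n+3)), (1, 1/2). -/
theorem TT_three_twos (n : ℕ) (hn : 2 ≤ n) :
    TTlist (3 :: List.replicate n 2) =
      {p : ℝ × ℝ | (2 * (n : ℝ) - 1) / (2 * (n : ℝ) + 1) < p.1 ∧ p.1 ≤ 1 ∧
        (1 + p.1) / 4 < p.2 ∧ p.2 ≤ (1 + ((n : ℝ) + 1) * p.1) / (2 * (n : ℝ) + 3)} ∧
    closure (TTlist (3 :: List.replicate n 2)) =
      convexHull ℝ ({((2 * (n : ℝ) - 1) / (2 * (n : ℝ) + 1), (n : ℝ) / (2 * (n : ℝ) + 1)),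
        (1, ((n : ℝ) + 2) / (2 * (n : ℝ) + 3)), (1, 1 / 2)} : Set (ℝ × ℝ)) := by
  have hset : TTlist (3 :: List.replicate n 2) =
      {p : ℝ × ℝ | (2 * (n : ℝ) - 1) / (2 * (n : ℝ) + 1) < p.1 ∧ p.1 ≤ 1 ∧
        (1 + p.1) / 4 < p.2 ∧ p.2 ≤ (1 + ((n : ℝ) + 1) * p.1) / (2 * (n : ℝ) + 3)} := by
    ext p
    rw [mem_TTlist_iff, Set.mem_setOf_eq]
    constructor
    · rintro ⟨h0, h⟩
      exact fwd n hn p h0 h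
    · rintro ⟨h1, h2, h3, h4⟩
      exact back n hn p h1 h2 h3 h4
  refine ⟨hset, ?_⟩
  rw [hset]
  exact closure_S n hn
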